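/- For every g in H¹₀(D), ‖g‖² ≤ (|D|/π) ‖∇g‖², i.e. ∫_D g² dxdy ≤ (|D|/π) ∫_D |∇g|² dxdy (Poincaré inequality with the explicit constant |D|/π coming from the area of D). -/

import Mathlib

open MeasureTheory Real Filter Topology

/-- Partial derivative in the `x` direction. -/
noncomputable def pdx (u : ℝ × ℝ → ℝ) (p : ℝ × ℝ) : ℝ := fderiv ℝ u p (1, 0)

/-- Partial derivative in the `y` direction. -/
noncomputable def pdy (u : ℝ × ℝ → ℝ) (p : ℝ × ℝ) : ℝ := fderiv ℝ u p (0, 1)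

/-- The Jacobian operator `J(u,v) = u_x v_y - u_y v_x`. -/
noncomputable def jac (u v : ℝ × ℝ → ℝ) (p : ℝ × ℝ) : ℝ :=
  pdx u p * pdy v p - pdy u p * pdx v p

/-- The Laplacian `Δu = u_xx + u_yy`. -/
noncomputable def lap (u : ℝ × ℝ → ℝ) (p : ℝ × ℝ) : ℝ :=
  pdx (pdx u) p + pdy (pdy u) p

/-- The squared `L²(D)` norm `‖u‖² = ∫_D u² dxdy`. -/
noncomputable def l2sq (D : Set (ℝ × ℝ)) (u : ℝ × ℝ → ℝ) : ℝ :=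
  ∫ p in D, (u p) ^ 2

/-- The `L²(D)` norm. -/
noncomputable def l2norm (D : Set (ℝ × ℝ)) (u : ℝ × ℝ → ℝ) : ℝ :=
  Real.sqrt (l2sq D u)

/-- The squared `L²(D)` norm of the gradient, `‖∇u‖² = ∫_D |∇u|² dxdy`. -/
noncomputable def gradsq (D : Set (ℝ × ℝ)) (u : ℝ × ℝ → ℝ) : ℝ :=
  ∫ p in D, ((pdx u p) ^ 2 + (pdy u p) ^ 2)

/-- The `L²(D)` norm of the gradient. -/
noncomputable def gradNorm (D : Set (ℝ × ℝ)) (u : ℝ × ℝ → ℝ) : ℝ :=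
  Real.sqrt (gradsq D u)

/-- The area `|D|` of the domain. -/
noncomputable def area (D : Set (ℝ × ℝ)) : ℝ := (volume D).toReal

lemma oneD (S : Set ℝ) (hS : IsOpen S) (hSb : Bornology.IsBounded S)
    (h h' : ℝ → ℝ) (hd : ∀ t, HasDerivAt h (h' t) t) (hc : Continuous h')
    (hz : ∀ t ∈ frontier S, h t = 0) {x : ℝ} (hx : x ∈ S) :
    2 * |h x| ≤ ∫ t in S, |h' t| := by
  obtain ⟨R, hR⟩ := hSb.subset_closedBall 0
  have hRx : |x| ≤ R := by simpa using hR hx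
  have hSR : S ⊆ Set.Icc (-R) R := by
    intro t ht; simpa [Real.closedBall_eq_Icc] using hR ht
  have hint : IntegrableOn (fun t => |h' t|) S :=
    (hc.abs.integrableOn_Icc (a := -R) (b := R)).mono_set hSR
  have habs := abs_le.1 hRx
  -- left boundary point a
  set A : Set ℝ := {t | t ≤ x ∧ t ∉ S} with hA
  have hAne : A.Nonempty := by
    refine ⟨-(R+1), by linarith, fun hmem => ?_⟩
    have := hSR hmem; simp only [Set.mem_Icc] at this; linarith
  have hAclosed : IsClosed A := by
    have : A = Set.Iic x ∩ Sᶜ := by ext t; simp [hA, Set.mem_Iic, and_comm]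
    rw [this]; exact isClosed_Iic.inter hS.isClosed_compl
  have hAbdd : BddAbove A := ⟨x, fun t ht => ht.1⟩
  set a := sSup A with ha
  have haA : a ∈ A := hAclosed.csSup_mem hAne hAbdd
  have hax : a < x := lt_of_le_of_ne haA.1 (fun e => haA.2 (e ▸ hx))
  have hIocS : Set.Ioc a x ⊆ S := by
    intro t ht
    by_contra hts
    exact absurd (le_csSup hAbdd ⟨ht.2, hts⟩) (not_le.2 ht.1)
  have hafr : a ∈ frontier S := by
    rw [hS.frontier_eq]
    refine ⟨?_, haA.2⟩
    have : a ∈ closure (Set.Ioc a x) := by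
      rw [closure_Ioc hax.ne]; exact ⟨le_refl a, hax.le⟩
    exact closure_mono hIocS this
  have hha : h a = 0 := hz a hafr
  -- right boundary point b
  set B : Set ℝ := {t | x ≤ t ∧ t ∉ S} with hB
  have hBne : B.Nonempty := by
    refine ⟨R+1, by linarith, fun hmem => ?_⟩
    have := hSR hmem; simp only [Set.mem_Icc] at this; linarith
  have hBclosed : IsClosed B := by
    have : B = Set.Ici x ∩ Sᶜ := by ext t; simp [hB, Set.mem_Ici, and_comm]
    rw [this]; exact isClosed_Ici.inter hS.isClosed_compl
  have hBbdd : BddBelow B := ⟨x, fun t ht => ht.1⟩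
  set b := sInf B with hb
  have hbB : b ∈ B := hBclosed.csInf_mem hBne hBbdd
  have hxb : x < b := lt_of_le_of_ne hbB.1 (fun e => hbB.2 (e ▸ hx))
  have hIcoS : Set.Ico x b ⊆ S := by
    intro t ht
    by_contra hts
    exact absurd (csInf_le hBbdd ⟨ht.1, hts⟩) (not_le.2 ht.2)
  have hbfr : b ∈ frontier S := by
    rw [hS.frontier_eq]
    refine ⟨?_, hbB.2⟩
    have : b ∈ closure (Set.Ico x b) := by
      rw [closure_Ico hxb.ne]; exact ⟨hxb.le, le_refl b⟩
    exact closure_mono hIcoS this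
  have hhb : h b = 0 := hz b hbfr
  -- FTC on both sides
  have hii : ∀ u v : ℝ, IntervalIntegrable h' volume u v := fun u v => hc.intervalIntegrable u v
  have hL : h x = ∫ t in a..x, h' t := by
    rw [intervalIntegral.integral_eq_sub_of_hasDerivAt (fun t _ => hd t) (hii a x), hha, sub_zero]
  have hRR : h x = - ∫ t in x..b, h' t := by
    rw [intervalIntegral.integral_eq_sub_of_hasDerivAt (fun t _ => hd t) (hii x b), hhb, zero_sub, neg_neg]
  have hL' : |h x| ≤ ∫ t in Set.Ioc a x, |h' t| := by
    rw [hL]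
    calc |∫ t in a..x, h' t| ≤ ∫ t in a..x, |h' t| :=
          intervalIntegral.abs_integral_le_integral_abs hax.le
      _ = ∫ t in Set.Ioc a x, |h' t| := intervalIntegral.integral_of_le hax.le
  have hR' : |h x| ≤ ∫ t in Set.Ioo x b, |h' t| := by
    rw [hRR, abs_neg, ← MeasureTheory.integral_Ioc_eq_integral_Ioo]
    calc |∫ t in x..b, h' t| ≤ ∫ t in x..b, |h' t| :=
          intervalIntegral.abs_integral_le_integral_abs hxb.le
      _ = ∫ t in Set.Ioc x b, |h' t| := intervalIntegral.integral_of_le hxb.le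
  have hsub1 : Set.Ioc a x ⊆ S := hIocS
  have hsub2 : Set.Ioo x b ⊆ S := fun t ht => hIcoS ⟨ht.1.le, ht.2⟩
  have hdisj : Disjoint (Set.Ioc a x) (Set.Ioo x b) := by
    apply Set.disjoint_left.2
    intro t h1 h2
    exact absurd h1.2 (not_le.2 h2.1)
  have hunion : ∫ t in Set.Ioc a x ∪ Set.Ioo x b, |h' t| =
      (∫ t in Set.Ioc a x, |h' t|) + ∫ t in Set.Ioo x b, |h' t| :=
    setIntegral_union hdisj measurableSet_Ioo (hint.mono_set hsub1) (hint.mono_set hsub2)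
  have hmono : ∫ t in Set.Ioc a x ∪ Set.Ioo x b, |h' t| ≤ ∫ t in S, |h' t| := by
    apply setIntegral_mono_set hint
    · filter_upwards with t using abs_nonneg _
    · exact Filter.Eventually.of_forall (Set.union_subset hsub1 hsub2)
  linarith




lemma pdx_continuous {g : ℝ × ℝ → ℝ} (hg : ContDiff ℝ (⊤ : ℕ∞) g) : Continuous (pdx g) := by
  have h := hg.continuous_fderiv (by simp)
  exact h.clm_apply continuous_const

lemma pdy_continuous {g : ℝ × ℝ → ℝ} (hg : ContDiff ℝ (⊤ : ℕ∞) g) : Continuous (pdy g) := by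
  have h := hg.continuous_fderiv (by simp)
  exact h.clm_apply continuous_const

lemma slice_x (D : Set (ℝ × ℝ)) (hD : IsOpen D) (hDb : Bornology.IsBounded D)
    (g : ℝ × ℝ → ℝ) (hg : ContDiff ℝ (⊤ : ℕ∞) g)
    (hgb : ∀ p ∈ frontier D, g p = 0) {x y : ℝ} (hxy : (x, y) ∈ D) :
    2 * |g (x, y)| ≤ ∫ t in {t : ℝ | (t, y) ∈ D}, |pdx g (t, y)| := by
  have hcont : Continuous (fun t : ℝ => (t, y)) := continuous_id.prodMk continuous_const
  set S : Set ℝ := {t : ℝ | (t, y) ∈ D} with hSdef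
  have hSo : IsOpen S := hD.preimage hcont
  have hSb : Bornology.IsBounded S := by
    obtain ⟨R, hR⟩ := hDb.subset_closedBall 0
    apply (Metric.isBounded_closedBall (x := (0:ℝ)) (r := R)).subset
    intro t ht
    have := hR ht
    simp only [Metric.mem_closedBall, dist_zero_right] at this ⊢
    exact le_trans (norm_fst_le ((t, y) : ℝ × ℝ)) this
  have hd : ∀ t : ℝ, HasDerivAt (fun t => g (t, y)) (pdx g (t, y)) t := by
    intro t
    have h1 : HasDerivAt (fun t : ℝ => (t, y)) ((1 : ℝ), (0 : ℝ)) t :=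
      (hasDerivAt_id t).prodMk (hasDerivAt_const t y)
    exact ((hg.differentiable (by simp)) (t, y)).hasFDerivAt.comp_hasDerivAt t h1
  have hz : ∀ t ∈ frontier S, g (t, y) = 0 := by
    intro t ht
    apply hgb
    rw [hSo.frontier_eq] at ht
    rw [hD.frontier_eq]
    exact ⟨hcont.closure_preimage_subset D ht.1, ht.2⟩
  exact oneD S hSo hSb (fun t => g (t, y)) (fun t => pdx g (t, y)) hd
    ((pdx_continuous hg).comp hcont) hz hxy

lemma slice_y (D : Set (ℝ × ℝ)) (hD : IsOpen D) (hDb : Bornology.IsBounded D)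
    (g : ℝ × ℝ → ℝ) (hg : ContDiff ℝ (⊤ : ℕ∞) g)
    (hgb : ∀ p ∈ frontier D, g p = 0) {x y : ℝ} (hxy : (x, y) ∈ D) :
    2 * |g (x, y)| ≤ ∫ s in {s : ℝ | (x, s) ∈ D}, |pdy g (x, s)| := by
  have hcont : Continuous (fun s : ℝ => (x, s)) := continuous_const.prodMk continuous_id
  set S : Set ℝ := {s : ℝ | (x, s) ∈ D} with hSdef
  have hSo : IsOpen S := hD.preimage hcont
  have hSb : Bornology.IsBounded S := by
    obtain ⟨R, hR⟩ := hDb.subset_closedBall 0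
    apply (Metric.isBounded_closedBall (x := (0:ℝ)) (r := R)).subset
    intro s hs
    have := hR hs
    simp only [Metric.mem_closedBall, dist_zero_right] at this ⊢
    exact le_trans (norm_snd_le ((x, s) : ℝ × ℝ)) this
  have hd : ∀ s : ℝ, HasDerivAt (fun s => g (x, s)) (pdy g (x, s)) s := by
    intro s
    have h1 : HasDerivAt (fun s : ℝ => (x, s)) ((0 : ℝ), (1 : ℝ)) s :=
      (hasDerivAt_const s x).prodMk (hasDerivAt_id s)
    exact ((hg.differentiable (by simp)) (x, s)).hasFDerivAt.comp_hasDerivAt s h1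
  have hz : ∀ s ∈ frontier S, g (x, s) = 0 := by
    intro s hs
    apply hgb
    rw [hSo.frontier_eq] at hs
    rw [hD.frontier_eq]
    exact ⟨hcont.closure_preimage_subset D hs.1, hs.2⟩
  exact oneD S hSo hSb (fun s => g (x, s)) (fun s => pdy g (x, s)) hd
    ((pdy_continuous hg).comp hcont) hz hxy

lemma cs_aux {α : Type*} [MeasurableSpace α] {μ : Measure α} [IsFiniteMeasure μ] {f : α → ℝ}
    (hf : Integrable f μ) (hf2 : Integrable (fun x => f x ^ 2) μ) (hpos : ∀ x, 0 ≤ f x) :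
    (∫ x, f x ∂μ) ^ 2 ≤ (μ Set.univ).toReal * ∫ x, f x ^ 2 ∂μ := by
  set P := ∫ x, f x ∂μ with hP
  set A := ∫ x, f x ^ 2 ∂μ with hA
  set M := (μ Set.univ).toReal with hM
  have hPn : 0 ≤ P := integral_nonneg hpos
  have hAn : 0 ≤ A := integral_nonneg (fun x => sq_nonneg _)
  have hMn : 0 ≤ M := ENNReal.toReal_nonneg
  have key : ∀ c : ℝ, 0 < c → 2 * P ≤ c * M + A / c := by
    intro c hc
    have h1 : ∀ x, 2 * f x ≤ c + f x ^ 2 / c := by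
      intro x
      have hd : 2 * f x - c ≤ f x ^ 2 / c := (le_div_iff₀ hc).2 (by nlinarith [sq_nonneg (f x - c)])
      linarith
    have h2 : (2 : ℝ) * P = ∫ x, 2 * f x ∂μ := (integral_const_mul 2 f).symm
    have h3 : ∫ x, (c + f x ^ 2 / c) ∂μ = c * M + A / c := by
      rw [integral_add (integrable_const c) (hf2.div_const c), integral_const, integral_div,
        smul_eq_mul, mul_comm]
      rfl
    rw [h2, ← h3]
    exact integral_mono (hf.const_mul 2) ((integrable_const c).add (hf2.div_const c)) h1
  have hstep : ∀ ε : ℝ, 0 < ε → P ^ 2 ≤ (M + ε) * (A + ε) := by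
    intro ε hε
    have hMε : 0 < M + ε := by linarith
    have hAε : 0 < A + ε := by linarith
    set c := Real.sqrt ((A + ε) / (M + ε)) with hc
    have hcpos : 0 < c := Real.sqrt_pos.2 (div_pos hAε hMε)
    have hcsq : c ^ 2 * (M + ε) = A + ε := by
      rw [hc, Real.sq_sqrt (le_of_lt (div_pos hAε hMε))]
      field_simp
    have hT : 2 * P ≤ c * (M + ε) + (A + ε) / c := by
      calc 2 * P ≤ c * M + A / c := key c hcpos
        _ ≤ c * (M + ε) + (A + ε) / c := by gcongr <;> linarith
    have hhalf : P ≤ (c * (M + ε) + (A + ε) / c) / 2 := by linarith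
    have hTn : 0 ≤ (c * (M + ε) + (A + ε) / c) / 2 := le_trans hPn hhalf
    have hsq := pow_le_pow_left₀ hPn hhalf 2
    have hT2 : ((c * (M + ε) + (A + ε) / c) / 2) ^ 2 = (M + ε) * (A + ε) := by
      field_simp
      linear_combination (c ^ 2 * (M + ε) - (A + ε)) * hcsq
    linarith [hsq, hT2.le, hT2.ge]
  by_contra hcon
  push_neg at hcon
  set ε := min 1 ((P ^ 2 - M * A) / (M + A + 2)) with hε
  have hεpos : 0 < ε := lt_min one_pos (div_pos (by linarith) (by linarith))
  have hε1 : ε ≤ 1 := min_le_left _ _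
  have h9 : ε * (M + A + 2) ≤ P ^ 2 - M * A := by
    rw [← le_div_iff₀ (by linarith : (0:ℝ) < M + A + 2)]
    exact min_le_right _ _
  have h7 := hstep ε hεpos
  have hε2 : ε ^ 2 ≤ ε := by nlinarith
  nlinarith [h7, h9, hεpos, hε2]






set_option maxHeartbeats 1000000 in
/-- Poincaré inequality with explicit constant `|D|/π`.
For every `g` in `H¹₀(D)`, `‖g‖² ≤ (|D|/π) ‖∇g‖²`, i.e.
`∫_D g² dxdy ≤ (|D|/π) ∫_D |∇g|² dxdy`. -/
theorem poincare_inequality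
    (D : Set (ℝ × ℝ)) (hD : IsOpen D) (hDb : Bornology.IsBounded D)
    (g : ℝ × ℝ → ℝ)
    (hg : ContDiff ℝ (⊤ : ℕ∞) g)
    (hgb : ∀ p ∈ frontier D, g p = 0) :
    l2sq D g ≤ (area D / π) * gradsq D g := by
  have hDm : MeasurableSet D := hD.measurableSet
  have hKc : IsCompact (closure D) := hDb.isCompact_closure
  have hIO : ∀ {f : ℝ × ℝ → ℝ}, Continuous f → IntegrableOn f D := fun {f} hf =>
    (hf.continuousOn.integrableOn_compact hKc).mono_set subset_closure
  set f1 : ℝ × ℝ → ℝ := fun p => |pdx g p| with hf1d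
  set f2 : ℝ × ℝ → ℝ := fun p => |pdy g p| with hf2d
  have hc1 : Continuous f1 := (pdx_continuous hg).abs
  have hc2 : Continuous f2 := (pdy_continuous hg).abs
  set k1 : ℝ × ℝ → ℝ := D.indicator f1 with hk1d
  set k2 : ℝ × ℝ → ℝ := D.indicator f2 with hk2d
  have hk1i : Integrable k1 := (integrable_indicator_iff hDm).2 (hIO hc1)
  have hk2i : Integrable k2 := (integrable_indicator_iff hDm).2 (hIO hc2)
  have hk1p : Integrable k1 ((volume : Measure ℝ).prod volume) := by
    rwa [← Measure.volume_eq_prod ℝ ℝ]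
  have hk2p : Integrable k2 ((volume : Measure ℝ).prod volume) := by
    rwa [← Measure.volume_eq_prod ℝ ℝ]
  set F : ℝ → ℝ := fun y => ∫ t, k1 (t, y) with hFd
  set G : ℝ → ℝ := fun x => ∫ s, k2 (x, s) with hGd
  have hFi : Integrable F := hk1p.integral_prod_right
  have hGi : Integrable G := hk2p.integral_prod_left
  have hFnn : ∀ y, 0 ≤ F y :=
    fun y => integral_nonneg fun t => Set.indicator_nonneg (fun p _ => abs_nonneg _) _
  have hGnn : ∀ x, 0 ≤ G x :=
    fun x => integral_nonneg fun s => Set.indicator_nonneg (fun p _ => abs_nonneg _) _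
  have hslicem : ∀ y : ℝ, MeasurableSet {t : ℝ | (t, y) ∈ D} :=
    fun y => (hD.preimage (continuous_id.prodMk continuous_const)).measurableSet
  have hslicem' : ∀ x : ℝ, MeasurableSet {s : ℝ | (x, s) ∈ D} :=
    fun x => (hD.preimage (continuous_const.prodMk continuous_id)).measurableSet
  have hFeq : ∀ y, F y = ∫ t in {t : ℝ | (t, y) ∈ D}, f1 (t, y) := by
    intro y
    rw [← integral_indicator (hslicem y)]
    refine integral_congr_ae (Filter.Eventually.of_forall fun t => ?_)
    by_cases h : (t, y) ∈ D <;> simp [hk1d, Set.indicator_apply, h]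
  have hGeq : ∀ x, G x = ∫ s in {s : ℝ | (x, s) ∈ D}, f2 (x, s) := by
    intro x
    rw [← integral_indicator (hslicem' x)]
    refine integral_congr_ae (Filter.Eventually.of_forall fun s => ?_)
    by_cases h : (x, s) ∈ D <;> simp [hk2d, Set.indicator_apply, h]
  -- pointwise bound on D
  have hpt : ∀ p ∈ D, (g p) ^ 2 ≤ (1 / 4) * (G p.1 * F p.2) := by
    intro p hp
    have hp' : (p.1, p.2) ∈ D := by simpa using hp
    have h1 := slice_x D hD hDb g hg hgb hp'
    have h2 := slice_y D hD hDb g hg hgb hp'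
    rw [← hFeq p.2] at h1
    rw [← hGeq p.1] at h2
    have hgp : g (p.1, p.2) = g p := by simp
    rw [hgp] at h1 h2
    nlinarith [abs_nonneg (g p), sq_abs (g p), hFnn p.2, hGnn p.1]
  -- integral comparison
  have hIg2 : IntegrableOn (fun p => g p ^ 2) D := hIO (hg.continuous.pow 2)
  have hprodFG : Integrable (fun p : ℝ × ℝ => G p.1 * F p.2) := by
    rw [Measure.volume_eq_prod ℝ ℝ]
    exact hGi.mul_prod hFi
  have step1 : ∫ p in D, g p ^ 2 ≤ ∫ p in D, (1 / 4 : ℝ) * (G p.1 * F p.2) :=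
    setIntegral_mono_on hIg2 ((hprodFG.const_mul _).integrableOn) hDm hpt
  have step2 : ∫ p in D, (1 / 4 : ℝ) * (G p.1 * F p.2) ≤ ∫ p : ℝ × ℝ, (1 / 4 : ℝ) * (G p.1 * F p.2) :=
    setIntegral_le_integral (hprodFG.const_mul _)
      (Filter.Eventually.of_forall fun (p : ℝ × ℝ) => by
        have := hFnn p.2; have := hGnn p.1; positivity)
  have step3 : ∫ p : ℝ × ℝ, (1 / 4 : ℝ) * (G p.1 * F p.2)
      = (1 / 4) * ((∫ x, G x) * (∫ y, F y)) := by
    rw [integral_const_mul]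
    congr 1
    rw [Measure.volume_eq_prod ℝ ℝ]
    exact integral_prod_mul G F
  have hFtot : ∫ y, F y = ∫ p in D, f1 p := by
    rw [← integral_indicator hDm]
    calc ∫ y, F y = ∫ z, k1 z ∂((volume : Measure ℝ).prod volume) :=
          (integral_prod_symm k1 hk1p).symm
      _ = ∫ p, k1 p := by rw [← Measure.volume_eq_prod ℝ ℝ]
  have hGtot : ∫ x, G x = ∫ p in D, f2 p := by
    rw [← integral_indicator hDm]
    calc ∫ x, G x = ∫ z, k2 z ∂((volume : Measure ℝ).prod volume) :=
          (integral_prod k2 hk2p).symm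
      _ = ∫ p, k2 p := by rw [← Measure.volume_eq_prod ℝ ℝ]
  -- Cauchy–Schwarz on D
  haveI hμfin : IsFiniteMeasure (volume.restrict D) :=
    ⟨by rw [Measure.restrict_apply_univ]; exact hDb.measure_lt_top⟩
  have hMuniv : ((volume.restrict D) Set.univ).toReal = area D := by
    rw [Measure.restrict_apply_univ]; rfl
  have cs1 := cs_aux (μ := volume.restrict D) (hIO hc1) (hIO (hc1.pow 2))
    (fun p => abs_nonneg _)
  have cs2 := cs_aux (μ := volume.restrict D) (hIO hc2) (hIO (hc2.pow 2))
    (fun p => abs_nonneg _)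
  rw [hMuniv] at cs1 cs2
  have hsq1 : ∫ p in D, f1 p ^ 2 = ∫ p in D, (pdx g p) ^ 2 := by
    refine integral_congr_ae (Filter.Eventually.of_forall fun p => ?_)
    simp [hf1d, sq_abs]
  have hsq2 : ∫ p in D, f2 p ^ 2 = ∫ p in D, (pdy g p) ^ 2 := by
    refine integral_congr_ae (Filter.Eventually.of_forall fun p => ?_)
    simp [hf2d, sq_abs]
  rw [hsq1] at cs1
  rw [hsq2] at cs2
  -- assemble
  set P1 := ∫ p in D, f1 p with hP1
  set P2 := ∫ p in D, f2 p with hP2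
  set A1 := ∫ p in D, (pdx g p) ^ 2 with hA1
  set A2 := ∫ p in D, (pdy g p) ^ 2 with hA2
  set M := area D with hMd
  have hP1n : 0 ≤ P1 := setIntegral_nonneg hDm fun p _ => abs_nonneg _
  have hP2n : 0 ≤ P2 := setIntegral_nonneg hDm fun p _ => abs_nonneg _
  have hA1n : 0 ≤ A1 := setIntegral_nonneg hDm fun p _ => sq_nonneg _
  have hA2n : 0 ≤ A2 := setIntegral_nonneg hDm fun p _ => sq_nonneg _
  have hMn : 0 ≤ M := ENNReal.toReal_nonneg
  have hgrad : gradsq D g = A1 + A2 := by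
    rw [gradsq, hA1, hA2]
    exact integral_add (hIO ((pdx_continuous hg).pow 2)) (hIO ((pdy_continuous hg).pow 2))
  have hl2 : l2sq D g ≤ (1 / 4) * (P2 * P1) := by
    rw [l2sq]
    calc ∫ p in D, g p ^ 2 ≤ ∫ p in D, (1 / 4 : ℝ) * (G p.1 * F p.2) := step1
      _ ≤ ∫ p : ℝ × ℝ, (1 / 4 : ℝ) * (G p.1 * F p.2) := step2
      _ = (1 / 4) * ((∫ x, G x) * (∫ y, F y)) := step3
      _ = (1 / 4) * (P2 * P1) := by rw [hFtot, hGtot]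
  have key2 : P1 * P2 ≤ M * (A1 + A2) / 2 := by
    have hsq : (P1 * P2) ^ 2 ≤ (M * (A1 + A2) / 2) ^ 2 := by
      have hmm := mul_le_mul cs1 cs2 (sq_nonneg P2) (mul_nonneg hMn hA1n)
      nlinarith [hmm, mul_nonneg (mul_nonneg hMn hMn) (sq_nonneg (A1 - A2))]
    exact (pow_le_pow_iff_left₀ (mul_nonneg hP1n hP2n) (by positivity) two_ne_zero).1 hsq
  have hπ : (0 : ℝ) < π := pi_pos
  have hπ4 : π ≤ 4 := pi_le_four
  have hl2n : 0 ≤ l2sq D g := setIntegral_nonneg hDm fun p _ => sq_nonneg _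
  rw [hgrad, div_mul_eq_mul_div, le_div_iff₀ hπ]
  nlinarith [hl2, key2, mul_nonneg hMn (by linarith : (0:ℝ) ≤ A1 + A2), hl2n]
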